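/- Let k > 0 and let ψ : [0,∞) → ℝ be differentiable with ψ'(t) = −2k·sin(2π·ψ(t)) for all t ≥ 0 and ψ(0) ∈ (−1/2, 1/2). Then ψ(t) ∈ (−1/2, 1/2) for all t ≥ 0 and lim_{t→∞} ψ(t) = 0. (Two identical diffusively coupled phase oscillators phase synchronize unless their initial phase difference is exactly 1/2, i.e., antiphase.) -/

import Mathlib

open Filter Topology

/-- Two identical diffusively coupled phase oscillators phase
synchronize unless they start exactly in antiphase: if `k > 0` and the phase difference
`ψ` satisfies `ψ' = −2k·sin(2πψ)` on `[0,∞)` with `ψ(0) ∈ (−1/2, 1/2)`, then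
`ψ(t) ∈ (−1/2, 1/2)` for all `t ≥ 0` and `ψ(t) → 0` as `t → ∞`. -/
theorem identical_oscillators_phase_synchronize
    (k : ℝ) (hk : 0 < k) (ψ : ℝ → ℝ)
    (hψ : ∀ t : ℝ, 0 ≤ t →
      HasDerivAt ψ (-2 * k * Real.sin (2 * Real.pi * ψ t)) t)
    (h0 : ψ 0 ∈ Set.Ioo (-(1 / 2) : ℝ) (1 / 2)) :
    (∀ t : ℝ, 0 ≤ t → ψ t ∈ Set.Ioo (-(1 / 2) : ℝ) (1 / 2)) ∧
    Tendsto ψ atTop (𝓝 0) := by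
  have hπ := Real.pi_pos
  obtain ⟨h01, h02⟩ := h0
  -- continuity of ψ on [0,∞)
  have hcont : ContinuousOn ψ (Set.Ici 0) := fun t ht =>
    (hψ t ht).continuousAt.continuousWithinAt
  -- h(t) = cos(2π ψ t) is monotone
  set h : ℝ → ℝ := fun t => Real.cos (2 * Real.pi * ψ t) with hh
  have hd : ∀ t : ℝ, 0 ≤ t → HasDerivAt h
      (-Real.sin (2 * Real.pi * ψ t) *
        (2 * Real.pi * (-2 * k * Real.sin (2 * Real.pi * ψ t)))) t := by
    intro t ht
    exact (Real.hasDerivAt_cos _).comp t ((hψ t ht).const_mul (2 * Real.pi))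
  have hmono : MonotoneOn h (Set.Ici 0) := by
    apply monotoneOn_of_deriv_nonneg (convex_Ici 0)
    · exact fun t ht => (hd t ht).continuousAt.continuousWithinAt
    · rw [interior_Ici]
      exact fun t ht => (hd t (le_of_lt ht)).differentiableAt.differentiableWithinAt
    · rw [interior_Ici]
      intro t ht
      rw [(hd t ht.le).deriv]
      nlinarith [mul_nonneg (mul_nonneg hπ.le hk.le)
        (sq_nonneg (Real.sin (2 * Real.pi * ψ t)))]
  have hh0 : (-1 : ℝ) < h 0 := by
    have hψ0lt : |ψ 0| < 1/2 := abs_lt.2 ⟨h01, h02⟩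
    have habs : |2 * Real.pi * ψ 0| < Real.pi := by
      rw [abs_mul, abs_of_pos (by linarith : (0:ℝ) < 2 * Real.pi)]
      nlinarith [abs_nonneg (ψ 0)]
    have := Real.cos_lt_cos_of_nonneg_of_le_pi (abs_nonneg (2 * Real.pi * ψ 0))
      le_rfl habs
    rw [Real.cos_abs, Real.cos_pi] at this
    exact this
  -- invariance
  have hinv : ∀ t : ℝ, 0 ≤ t → ψ t ∈ Set.Ioo (-(1 / 2) : ℝ) (1 / 2) := by
    intro t ht
    by_contra hmem
    have hc2 : ContinuousOn ψ (Set.Icc 0 t) :=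
      hcont.mono (Set.Icc_subset_Ici_self)
    have key : ∃ s ∈ Set.Icc (0:ℝ) t, ψ s = 1/2 ∨ ψ s = -(1/2) := by
      rcases not_and_or.1 hmem with hle | hge
      · push_neg at hle
        have : (-(1/2) : ℝ) ∈ Set.Icc (ψ t) (ψ 0) := ⟨hle, by linarith⟩
        obtain ⟨s, hs, hps⟩ := intermediate_value_Icc' ht hc2 this
        exact ⟨s, hs, Or.inr hps⟩
      · push_neg at hge
        have : ((1/2) : ℝ) ∈ Set.Icc (ψ 0) (ψ t) := ⟨by linarith, hge⟩
        obtain ⟨s, hs, hps⟩ := intermediate_value_Icc ht hc2 this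
        exact ⟨s, hs, Or.inl hps⟩
    obtain ⟨s, hs, hps⟩ := key
    have hhs : h s = -1 := by
      rcases hps with hps | hps
      · simp only [hh, hps]
        rw [show 2 * Real.pi * (1/2) = Real.pi by ring, Real.cos_pi]
      · simp only [hh, hps]
        rw [show 2 * Real.pi * -(1/2) = -Real.pi by ring, Real.cos_neg, Real.cos_pi]
    have := hmono (Set.self_mem_Ici) (Set.mem_Ici.2 hs.1) hs.1
    rw [hhs] at this
    linarith
  refine ⟨hinv, ?_⟩
  -- |ψ t| ≤ a0 where a0 := max |ψ 0| (1/4)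
  set a0 : ℝ := max |ψ 0| (1/4) with ha0
  have ha0pos : 0 < a0 := lt_of_lt_of_le (by norm_num) (le_max_right _ _)
  have ha0lt : a0 < 1/2 := by
    apply max_lt _ (by norm_num)
    rw [abs_lt]; exact ⟨by linarith, h02⟩
  have habs : ∀ t : ℝ, 0 ≤ t → |ψ t| ≤ a0 := by
    intro t ht
    by_contra hgt
    push_neg at hgt
    have h1 : |ψ 0| < |ψ t| := lt_of_le_of_lt (le_max_left _ _) hgt
    have h2 : |ψ t| < 1/2 := by
      rw [abs_lt]; exact ⟨(hinv t ht).1, (hinv t ht).2⟩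
    have hlt : Real.cos (2 * Real.pi * |ψ t|) < Real.cos (2 * Real.pi * |ψ 0|) :=
      Real.cos_lt_cos_of_nonneg_of_le_pi
        (by positivity) (by nlinarith) (by nlinarith)
    have e1 : Real.cos (2 * Real.pi * |ψ t|) = h t := by
      simp only [hh]
      rw [← Real.cos_abs (2 * Real.pi * ψ t), abs_mul,
        abs_of_pos (by linarith : (0:ℝ) < 2 * Real.pi)]
    have e2 : Real.cos (2 * Real.pi * |ψ 0|) = h 0 := by
      simp only [hh]
      rw [← Real.cos_abs (2 * Real.pi * ψ 0), abs_mul,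
        abs_of_pos (by linarith : (0:ℝ) < 2 * Real.pi)]
    rw [e1, e2] at hlt
    exact absurd (hmono Set.self_mem_Ici (Set.mem_Ici.2 ht) ht) (not_le.2 hlt)
  -- concavity: sin(2πx) ≥ (x/a0) sin(2π a0) on [0, a0]
  have hsin0 : 0 < Real.sin (2 * Real.pi * a0) :=
    Real.sin_pos_of_pos_of_lt_pi (by positivity) (by nlinarith)
  have hconc : ∀ x : ℝ, 0 ≤ x → x ≤ a0 →
      (x / a0) * Real.sin (2 * Real.pi * a0) ≤ Real.sin (2 * Real.pi * x) := by
    intro x hx hxa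
    have hb : 0 ≤ x / a0 := by positivity
    have hab : x / a0 ≤ 1 := (div_le_one ha0pos).2 hxa
    have hmem1 : (0:ℝ) ∈ Set.Icc (0:ℝ) Real.pi := Set.mem_Icc.2 ⟨le_rfl, hπ.le⟩
    have hmem2 : 2 * Real.pi * a0 ∈ Set.Icc (0:ℝ) Real.pi :=
      Set.mem_Icc.2 ⟨by positivity, by nlinarith⟩
    have := strictConcaveOn_sin_Icc.concaveOn.2 hmem1 hmem2
      (by linarith : (0:ℝ) ≤ 1 - x / a0) hb (by ring)
    simp only [smul_eq_mul, Real.sin_zero, mul_zero, zero_add] at this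
    have heq : x / a0 * (2 * Real.pi * a0) = 2 * Real.pi * x := by
      field_simp
    rwa [heq] at this
  -- key inequality
  set c : ℝ := Real.sin (2 * Real.pi * a0) / a0 with hc
  have hcpos : 0 < c := by positivity
  have hkey : ∀ t : ℝ, 0 ≤ t → c * (ψ t)^2 ≤ ψ t * Real.sin (2 * Real.pi * ψ t) := by
    intro t ht
    rcases le_or_gt 0 (ψ t) with hpos | hneg
    · have := hconc (ψ t) hpos (le_trans (le_abs_self _) (habs t ht))
      have h2 := mul_le_mul_of_nonneg_left this hpos
      rw [hc]
      calc Real.sin (2 * Real.pi * a0) / a0 * ψ t ^ 2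
          = ψ t * (ψ t / a0 * Real.sin (2 * Real.pi * a0)) := by ring
        _ ≤ ψ t * Real.sin (2 * Real.pi * ψ t) := h2
    · have hx : 0 ≤ -ψ t := by linarith
      have := hconc (-ψ t) hx (le_trans (neg_le_abs _) (habs t ht))
      rw [show 2 * Real.pi * -ψ t = -(2 * Real.pi * ψ t) by ring, Real.sin_neg] at this
      have h2 := mul_le_mul_of_nonneg_left this hx
      rw [hc]
      calc Real.sin (2 * Real.pi * a0) / a0 * ψ t ^ 2
          = -ψ t * (-ψ t / a0 * Real.sin (2 * Real.pi * a0)) := by ring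
        _ ≤ -ψ t * -Real.sin (2 * Real.pi * ψ t) := h2
        _ = ψ t * Real.sin (2 * Real.pi * ψ t) := by ring
  -- Gronwall: g t = ψ t ^ 2 * exp (C t) is antitone
  set C : ℝ := 4 * k * c with hCdef
  have hCpos : 0 < C := by positivity
  set g : ℝ → ℝ := fun t => (ψ t)^2 * Real.exp (C * t) with hg
  have hgd : ∀ t : ℝ, 0 ≤ t → HasDerivAt g
      ((2 * ψ t ^ 1 * (-2 * k * Real.sin (2 * Real.pi * ψ t))) * Real.exp (C * t)
        + (ψ t)^2 * (Real.exp (C * t) * C)) t := by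
    intro t ht
    have hexp : HasDerivAt (fun t => Real.exp (C * t)) (Real.exp (C * t) * C) t := by
      simpa using ((hasDerivAt_id t).const_mul C).exp
    exact ((hψ t ht).pow 2).mul hexp
  have hganti : AntitoneOn g (Set.Ici 0) := by
    apply antitoneOn_of_deriv_nonpos (convex_Ici 0)
    · exact fun t ht => (hgd t ht).continuousAt.continuousWithinAt
    · rw [interior_Ici]
      exact fun t ht => (hgd t (le_of_lt ht)).differentiableAt.differentiableWithinAt
    · rw [interior_Ici]
      intro t ht
      rw [(hgd t ht.le).deriv]
      have hkt := hkey t ht.le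
      have he : (0:ℝ) < Real.exp (C * t) := Real.exp_pos _
      have : 2 * ψ t ^ 1 * (-2 * k * Real.sin (2 * Real.pi * ψ t))
          + (ψ t)^2 * C ≤ 0 := by
        rw [hCdef]
        nlinarith
      nlinarith
  -- exponential bound
  have hbound : ∀ t : ℝ, 0 ≤ t → |ψ t| ≤ a0 * Real.exp (-(C/2) * t) := by
    intro t ht
    have hgle : g t ≤ g 0 := hganti Set.self_mem_Ici (Set.mem_Ici.2 ht) ht
    have hg0 : g 0 = (ψ 0)^2 := by simp [hg]
    have hψ0 : (ψ 0)^2 ≤ a0^2 := by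
      have := le_max_left |ψ 0| (1/4)
      nlinarith [abs_nonneg (ψ 0), sq_abs (ψ 0)]
    have hexp1 : Real.exp (C * t) * Real.exp (-(C * t)) = 1 := by
      rw [← Real.exp_add]; simp
    have hsq : (ψ t)^2 ≤ (a0 * Real.exp (-(C/2) * t))^2 := by
      have hB : (a0 * Real.exp (-(C/2) * t))^2 = a0^2 * Real.exp (-(C * t)) := by
        rw [mul_pow, sq (Real.exp _), ← Real.exp_add]; ring_nf
      rw [hB]
      have h1 : (ψ t)^2 * Real.exp (C * t) ≤ a0^2 := by
        rw [hg0] at hgle; exact le_trans hgle hψ0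
      nlinarith [Real.exp_pos (C * t), Real.exp_pos (-(C * t)), sq_nonneg (ψ t)]
    calc |ψ t| = Real.sqrt ((ψ t)^2) := (Real.sqrt_sq_eq_abs _).symm
      _ ≤ Real.sqrt ((a0 * Real.exp (-(C/2) * t))^2) := Real.sqrt_le_sqrt hsq
      _ = a0 * Real.exp (-(C/2) * t) := Real.sqrt_sq (by positivity)
  -- squeeze
  have htend : Tendsto (fun t => a0 * Real.exp (-(C/2) * t)) atTop (𝓝 0) := by
    have h1 : Tendsto (fun t : ℝ => -(C/2) * t) atTop atBot :=
      Tendsto.const_mul_atTop_of_neg (by linarith) tendsto_id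
    have h2 : Tendsto (fun t : ℝ => Real.exp (-(C/2) * t)) atTop (𝓝 0) :=
      Real.tendsto_exp_atBot.comp h1
    simpa only [mul_zero] using h2.const_mul a0
  have htendneg : Tendsto (fun t => -(a0 * Real.exp (-(C/2) * t))) atTop (𝓝 0) := by
    simpa only [neg_zero] using htend.neg
  refine tendsto_of_tendsto_of_tendsto_of_le_of_le'
    (g := fun t => -(a0 * Real.exp (-(C/2) * t)))
    (h := fun t => a0 * Real.exp (-(C/2) * t)) htendneg htend ?_ ?_
  · filter_upwards [eventually_ge_atTop (0:ℝ)] with t ht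
    exact (abs_le.1 (hbound t ht)).1
  · filter_upwards [eventually_ge_atTop (0:ℝ)] with t ht
    exact (abs_le.1 (hbound t ht)).2
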